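/- Let n and m be positive integers with m ≥ n − 1. Then n · P(n,m) = ∑_{d | m, 1 ≤ d ≤ n} P(n − d, m), where the sum is over positive divisors d of m with d ≤ n. Equivalently, the number of elements g ∈ S_n with g^m = 1 equals ∑_{d | m, 1 ≤ d ≤ n} ((n−1)!/(n−d)!) · N(n−d, m), where N(k,m) is the number of elements h ∈ S_k with h^m = 1 (and N(0,m) = 1). -/

import Mathlib

open Equiv Equiv.Perm Function
open Fin.NatCast Fin.CommRing

/-- P(n,m): the proportion of elements of the symmetric group `S_n`
with `g ^ m = 1` (for `n = 0` this equals `1`, matching the convention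
`P(r,m) = 1` for `r ≤ 0`). -/
noncomputable def P (n m : ℕ) : ℝ :=
  (Nat.card {g : Equiv.Perm (Fin n) // g ^ m = 1} : ℝ) / (Nat.factorial n)

noncomputable def Ncard (k m : ℕ) : ℕ := Nat.card {g : Perm (Fin k) // g ^ m = 1}

lemma permCongr_pow {α β : Type*} (e : α ≃ β) (g : Perm α) (k : ℕ) :
    e.permCongr (g ^ k) = (e.permCongr g) ^ k := by
  induction k with
  | zero => ext x; simp
  | succ k ih => rw [pow_succ, pow_succ, ← ih]; ext x; simp

lemma Ncard_eq {β : Type*} [Fintype β] (m : ℕ) :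
    Nat.card {g : Perm β // g ^ m = 1} = Ncard (Fintype.card β) m := by
  apply Nat.card_congr
  refine Equiv.subtypeEquiv (Equiv.permCongr (Fintype.equivFin β)) (fun g => ?_)
  rw [← permCongr_pow]
  constructor
  · intro h; rw [h]; ext x; simp
  · intro h
    have h1 : (Fintype.equivFin β).permCongr (g ^ m) = (Fintype.equivFin β).permCongr 1 := by
      rw [h]; ext x; simp
    exact (Equiv.permCongr (Fintype.equivFin β)).injective h1

variable {n m d' : ℕ}

noncomputable def cyc (f : Fin (d'+1) ↪ Fin n) : Perm (Fin n) :=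
  (finRotate (d'+1)).extendDomain (Equiv.ofInjective f f.injective)

lemma cyc_apply_mem (f : Fin (d'+1) ↪ Fin n) (i : Fin (d'+1)) : cyc f (f i) = f (i+1) := by
  have h1 := Equiv.Perm.extendDomain_apply_image (finRotate (d'+1))
    (Equiv.ofInjective f f.injective) i
  simpa [cyc] using h1

lemma cyc_apply_not_mem (f : Fin (d'+1) ↪ Fin n) {y : Fin n} (hy : y ∉ Set.range f) :
    cyc f y = y :=
  Equiv.Perm.extendDomain_apply_not_subtype _ _ hy

noncomputable def psi (f : Fin (d'+1) ↪ Fin n) (h : Perm {y : Fin n // y ∉ Set.range f}) :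
    Perm (Fin n) := cyc f * Equiv.Perm.ofSubtype h

lemma psi_apply_mem (f : Fin (d'+1) ↪ Fin n) (h : Perm {y : Fin n // y ∉ Set.range f})
    (i : Fin (d'+1)) : psi f h (f i) = f (i+1) := by
  unfold psi
  rw [Equiv.Perm.mul_apply, Equiv.Perm.ofSubtype_apply_of_not_mem h (by simp : ¬ f i ∉ Set.range f),
    cyc_apply_mem]

lemma psi_apply_not_mem (f : Fin (d'+1) ↪ Fin n) (h : Perm {y : Fin n // y ∉ Set.range f})
    {y : Fin n} (hy : y ∉ Set.range f) : psi f h y = (h ⟨y, hy⟩ : Fin n) := by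
  unfold psi
  rw [Equiv.Perm.mul_apply, Equiv.Perm.ofSubtype_apply_of_mem h hy,
    cyc_apply_not_mem f (h ⟨y, hy⟩).2]

lemma psi_pow_apply (f : Fin (d'+1) ↪ Fin n) (h : Perm {y : Fin n // y ∉ Set.range f})
    (k : ℕ) : (psi f h ^ k) (f 0) = f ((k : Fin (d'+1))) := by
  induction k with
  | zero => simp
  | succ k ih =>
    rw [pow_succ', Equiv.Perm.mul_apply, ih, psi_apply_mem]
    congr 1
    push_cast
    ring

lemma finRotate_pow_apply (k : ℕ) (i : Fin (d'+1)) :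
    ((finRotate (d'+1)) ^ k) i = i + (k : Fin (d'+1)) := by
  induction k with
  | zero => simp
  | succ k ih =>
    rw [pow_succ', Equiv.Perm.mul_apply, ih, finRotate_succ_apply]
    push_cast
    ring

lemma finRotate_pow_eq_one {mm : ℕ} (hdm : (d'+1) ∣ mm) : (finRotate (d'+1)) ^ mm = 1 := by
  ext i
  rw [finRotate_pow_apply]
  have : ((mm : Fin (d'+1))) = 0 := by
    rwa [Fin.natCast_eq_zero]
  simp [this]

lemma cyc_commute (f : Fin (d'+1) ↪ Fin n) (h : Perm {y : Fin n // y ∉ Set.range f}) :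
    Commute (cyc f) (Equiv.Perm.ofSubtype h) := by
  ext y
  by_cases hy : y ∈ Set.range f
  · obtain ⟨i, rfl⟩ := hy
    rw [Equiv.Perm.mul_apply, Equiv.Perm.mul_apply,
      Equiv.Perm.ofSubtype_apply_of_not_mem h (by simp : ¬ f i ∉ Set.range f), cyc_apply_mem,
      Equiv.Perm.ofSubtype_apply_of_not_mem h (by simp : ¬ f (i+1) ∉ Set.range f)]
  · rw [Equiv.Perm.mul_apply, Equiv.Perm.mul_apply, cyc_apply_not_mem f hy,
      Equiv.Perm.ofSubtype_apply_of_mem h hy, cyc_apply_not_mem f (h ⟨y, hy⟩).2]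

lemma psi_pow_eq_one (f : Fin (d'+1) ↪ Fin n) (h : Perm {y : Fin n // y ∉ Set.range f})
    (hdm : (d'+1) ∣ m) (hh : h ^ m = 1) : psi f h ^ m = 1 := by
  unfold psi
  rw [(cyc_commute f h).mul_pow]
  have h1 : cyc f ^ m = 1 := by
    unfold cyc
    rw [← Equiv.Perm.extendDomain_pow, finRotate_pow_eq_one hdm, Equiv.Perm.extendDomain_one]
  have h2 : Equiv.Perm.ofSubtype h ^ m = 1 := by
    rw [← map_pow, hh, map_one]
  rw [h1, h2, one_mul]

lemma psi_minimalPeriod (f : Fin (d'+1) ↪ Fin n) (h : Perm {y : Fin n // y ∉ Set.range f}) :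
    Function.minimalPeriod (psi f h) (f 0) = d' + 1 := by
  have hper : Function.IsPeriodicPt (psi f h) (d'+1) (f 0) := by
    show (psi f h)^[d'+1] (f 0) = f 0
    rw [Equiv.Perm.iterate_eq_pow, psi_pow_apply]
    simp
  have hpos : 0 < Function.minimalPeriod (psi f h) (f 0) :=
    hper.minimalPeriod_pos (Nat.succ_pos _)
  have hdvd : Function.minimalPeriod (psi f h) (f 0) ∣ d' + 1 :=
    Function.isPeriodicPt_iff_minimalPeriod_dvd.mp hper
  have hle := Nat.le_of_dvd (Nat.succ_pos _) hdvd
  rcases lt_or_eq_of_le hle with hlt | heq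
  · exfalso
    have := Function.iterate_minimalPeriod (f := ⇑(psi f h)) (x := f 0)
    rw [Equiv.Perm.iterate_eq_pow, psi_pow_apply] at this
    have h0 : ((Function.minimalPeriod (psi f h) (f 0) : ℕ) : Fin (d'+1)) = 0 := by
      apply f.injective
      simpa using this
    rw [Fin.natCast_eq_zero] at h0
    exact absurd (Nat.le_of_dvd hpos h0) (by omega)
  · exact heq

lemma psi_bijective (hm0 : 0 < m) (hdm : (d'+1) ∣ m) :
    Function.Bijective (fun s : (Σ f : Fin (d'+1) ↪ Fin n,
        {h : Perm {y : Fin n // y ∉ Set.range f} // h ^ m = 1}) =>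
      (⟨(s.1 0, psi s.1 s.2.1), psi_pow_eq_one s.1 s.2.1 hdm s.2.2,
        psi_minimalPeriod s.1 s.2.1⟩ :
        {p : Fin n × Perm (Fin n) //
          p.2 ^ m = 1 ∧ Function.minimalPeriod p.2 p.1 = d'+1})) := by
  constructor
  · rintro ⟨f, h, hh⟩ ⟨f', h', hh'⟩ heq
    simp only [Subtype.mk.injEq, Prod.mk.injEq] at heq
    obtain ⟨h0, hpsi⟩ := heq
    have hf : f = f' := by
      ext i
      have e1 : f i = (psi f h ^ (i : ℕ)) (f 0) := by
        rw [psi_pow_apply, Fin.cast_val_eq_self]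
      have e2 : f' i = (psi f' h' ^ (i : ℕ)) (f' 0) := by
        rw [psi_pow_apply, Fin.cast_val_eq_self]
      rw [e1, e2, h0, hpsi]
    subst hf
    have hhh : h = h' := by
      apply Equiv.ext; intro y; apply Subtype.ext
      have := congrArg (fun g : Perm (Fin n) => g (y : Fin n)) hpsi
      rw [psi_apply_not_mem f h y.2, psi_apply_not_mem f h' y.2] at this
      exact this
    subst hhh
    rfl
  · rintro ⟨⟨x, g⟩, hg, hmp⟩
    simp only at hg hmp
    have hperiodic : x ∈ Function.periodicPts g := by
      rw [← Function.minimalPeriod_pos_iff_mem_periodicPts, hmp]; exact Nat.succ_pos _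
    have hgd : (g ^ (d'+1)) x = x := by
      have := Function.iterate_minimalPeriod (f := ⇑g) (x := x)
      rwa [hmp, Equiv.Perm.iterate_eq_pow] at this
    have hinj : Function.Injective (fun i : Fin (d'+1) => (g ^ (i : ℕ)) x) := by
      intro i j hij
      have hIJ := Function.iterate_injOn_Iio_minimalPeriod (f := ⇑g) (x := x)
      rw [hmp] at hIJ
      exact Fin.ext (hIJ (Set.mem_Iio.mpr i.isLt) (Set.mem_Iio.mpr j.isLt)
        (by simpa [Equiv.Perm.iterate_eq_pow] using hij))
    set f : Fin (d'+1) ↪ Fin n := ⟨fun i => (g ^ (i : ℕ)) x, hinj⟩ with hf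
    have claim : ∀ k : ℕ, (g ^ k) x = f ((k : Fin (d'+1))) := by
      intro k
      have : (⇑g)^[k % (d'+1)] x = (⇑g)^[k] x := by
        rw [← hmp]
        exact Function.iterate_mod_minimalPeriod_eq
      simp only [Equiv.Perm.iterate_eq_pow] at this
      rw [← this]
      show _ = (g ^ ((k : Fin (d'+1)) : ℕ)) x
      rw [Fin.val_natCast]
    have hmem : ∀ y : Fin n, y ∈ Set.range f ↔ ∃ k : ℕ, (g ^ k) x = y := by
      intro y
      constructor
      · rintro ⟨i, rfl⟩
        exact ⟨(i : ℕ), by rw [claim, Fin.cast_val_eq_self]⟩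
      · rintro ⟨k, rfl⟩
        exact ⟨(k : Fin (d'+1)), (claim k).symm⟩
    have hinv : ∀ y : Fin n, y ∉ Set.range f ↔ g y ∉ Set.range f := by
      intro y
      rw [not_iff_not, hmem y, hmem (g y)]
      constructor
      · rintro ⟨k, rfl⟩
        exact ⟨k + 1, by rw [pow_succ', Equiv.Perm.mul_apply]⟩
      · rintro ⟨k, hk⟩
        refine ⟨k + d', ?_⟩
        apply g.injective
        rw [← Equiv.Perm.mul_apply, ← pow_succ']
        have hs : k + d' + 1 = k + (d' + 1) := by ring
        rw [hs, pow_add, Equiv.Perm.mul_apply, hgd, hk]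
    set h : Perm {y : Fin n // y ∉ Set.range f} := Equiv.Perm.subtypePerm g (fun y => (hinv y).symm) with hh
    have hh1 : h ^ m = 1 := by
      rw [hh, Equiv.Perm.subtypePerm_pow]
      apply Equiv.ext; intro y; apply Subtype.ext
      simp [Equiv.Perm.subtypePerm_apply, hg]
    refine ⟨⟨f, h, hh1⟩, ?_⟩
    apply Subtype.ext
    simp only [Prod.mk.injEq]
    constructor
    · show f 0 = x
      simp [hf]
    · show psi f h = g
      apply Equiv.ext; intro y
      by_cases hy : y ∈ Set.range f
      · obtain ⟨i, rfl⟩ := hy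
        rw [psi_apply_mem]
        show f (i + 1) = g (f i)
        have e1 : g (f i) = (g ^ ((i : ℕ) + 1)) x := by
          rw [pow_succ', Equiv.Perm.mul_apply]; rfl
        rw [e1, claim]
        congr 1
        push_cast
        rfl
      · rw [psi_apply_not_mem f h hy]
        rfl

lemma card_compl_range (f : Fin (d'+1) ↪ Fin n) :
    Fintype.card {y : Fin n // y ∉ Set.range ⇑f} = n - (d'+1) := by
  rw [Fintype.card_subtype_compl, Fintype.card_fin]
  congr 1
  exact ((Fintype.card_congr (Equiv.ofInjective f f.injective)).symm).trans (Fintype.card_fin _)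

lemma card_fiber (hm0 : 0 < m) (hdm : (d'+1) ∣ m) :
    Nat.card {p : Fin n × Perm (Fin n) //
        p.2 ^ m = 1 ∧ Function.minimalPeriod p.2 p.1 = d'+1} =
      n.descFactorial (d'+1) * Ncard (n - (d'+1)) m := by
  rw [← Nat.card_eq_of_bijective _ (psi_bijective hm0 hdm)]
  rw [Nat.card_eq_fintype_card, Fintype.card_sigma]
  have key : ∀ f : Fin (d'+1) ↪ Fin n,
      Fintype.card {h : Perm {y : Fin n // y ∉ Set.range ⇑f} // h ^ m = 1} =
        Ncard (n - (d'+1)) m := by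
    intro f
    rw [← Nat.card_eq_fintype_card, Ncard_eq, card_compl_range]
  simp_rw [key]
  rw [Finset.sum_const, smul_eq_mul, Finset.card_univ, Fintype.card_embedding_eq,
    Fintype.card_fin, Fintype.card_fin]

lemma key_count (n m : ℕ) (hn : 0 < n) (hm : 0 < m) :
    n * Ncard n m = ∑ d ∈ m.divisors.filter (fun d => d ≤ n),
      n.descFactorial d * Ncard (n - d) m := by
  classical
  have hL : Nat.card {p : Fin n × Perm (Fin n) // p.2 ^ m = 1} = n * Ncard n m := by
    rw [Nat.card_congr (Equiv.mk
      (fun p : {p : Fin n × Perm (Fin n) // p.2 ^ m = 1} =>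
        ((p.1.1 : Fin n), (⟨p.1.2, p.2⟩ : {g : Perm (Fin n) // g ^ m = 1})))
      (fun q => ⟨(q.1, q.2.1), q.2.2⟩) (fun p => rfl) (fun q => rfl))]
    rw [Nat.card_prod, Nat.card_eq_fintype_card, Fintype.card_fin]
    rfl
  rw [← hL, Nat.card_eq_fintype_card, Fintype.card_subtype]
  rw [Finset.card_eq_sum_card_fiberwise
    (f := fun p : Fin n × Perm (Fin n) => Function.minimalPeriod ⇑p.2 p.1)
    (t := m.divisors.filter (fun d => d ≤ n)) (fun p hp => by
      rw [Finset.mem_coe, Finset.mem_filter] at hp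
      obtain ⟨-, hp2⟩ := hp
      rw [Finset.mem_coe, Finset.mem_filter, Nat.mem_divisors]
      have hper : Function.IsPeriodicPt ⇑p.2 m p.1 := by
        show (⇑p.2)^[m] p.1 = p.1
        rw [Equiv.Perm.iterate_eq_pow, hp2]
        rfl
      refine ⟨⟨Function.isPeriodicPt_iff_minimalPeriod_dvd.mp hper, hm.ne'⟩, ?_⟩
      have hinj : Function.Injective
          (fun i : Fin (Function.minimalPeriod ⇑p.2 p.1) => (p.2 ^ (i : ℕ)) p.1) := by
        intro i j hij
        exact Fin.ext (Function.iterate_injOn_Iio_minimalPeriod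
          (Set.mem_Iio.mpr i.isLt) (Set.mem_Iio.mpr j.isLt)
          (by simpa [Equiv.Perm.iterate_eq_pow] using hij))
      have hle := Fintype.card_le_of_injective _ hinj
      simpa using hle)]
  apply Finset.sum_congr rfl
  intro d hd
  rw [Finset.mem_filter, Nat.mem_divisors] at hd
  obtain ⟨⟨hdvd, -⟩, hdn⟩ := hd
  have hd0 : 0 < d := Nat.pos_of_dvd_of_pos hdvd hm
  obtain ⟨d', rfl⟩ : ∃ d', d = d' + 1 := ⟨d - 1, by omega⟩
  rw [Finset.filter_filter]
  have hcf := card_fiber (n := n) (m := m) (d' := d') hm hdvd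
  rw [Nat.card_eq_fintype_card, Fintype.card_subtype] at hcf
  convert hcf using 2

theorem stmt14 (n m : ℕ) (hn : 0 < n) (hm : 0 < m) (h : n - 1 ≤ m) :
    (n : ℝ) * P n m = ∑ d ∈ m.divisors.filter (fun d => d ≤ n), P (n - d) m := by
  have hP : ∀ k, P k m = (Ncard k m : ℝ) / (Nat.factorial k) := fun k => rfl
  have hkey := key_count n m hn hm
  have hR : (n : ℝ) * (Ncard n m : ℝ) =
      ∑ d ∈ m.divisors.filter (fun d => d ≤ n),
        (n.descFactorial d : ℝ) * (Ncard (n - d) m : ℝ) := by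
    exact_mod_cast congrArg (Nat.cast : ℕ → ℝ) hkey
  simp only [hP]
  have hterm : ∀ d ∈ m.divisors.filter (fun d => d ≤ n),
      (Ncard (n - d) m : ℝ) / (Nat.factorial (n - d) : ℝ) =
        (n.descFactorial d : ℝ) * (Ncard (n - d) m : ℝ) / (Nat.factorial n : ℝ) := by
    intro d hd
    rw [Finset.mem_filter] at hd
    have hdn : d ≤ n := hd.2
    have h1 : (Nat.factorial n : ℝ) = (Nat.factorial (n - d) : ℝ) * (n.descFactorial d : ℝ) := by
      exact_mod_cast (Nat.factorial_mul_descFactorial hdn).symm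
    have h2 : (Nat.factorial (n - d) : ℝ) ≠ 0 := Nat.cast_ne_zero.mpr (Nat.factorial_ne_zero _)
    have h3 : (n.descFactorial d : ℝ) ≠ 0 := by
      have : n.descFactorial d ≠ 0 := fun h0 =>
        absurd (Nat.descFactorial_eq_zero_iff_lt.mp h0) (not_lt.mpr hdn)
      exact_mod_cast this
    rw [h1]
    field_simp
  rw [Finset.sum_congr rfl hterm, ← Finset.sum_div, ← hR, mul_div_assoc]
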